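/- Let (S_n) be a centered real random walk with Var(S_1) > 0 and E[e^{u S_1}] < ∞ for all u ∈ (−(1+η), η) for some η > 0. Then there exists a constant c > 1 such that for all L ≥ 1 and all 0 ≤ a ≤ L: E_a[ e^{S_{τ_0^- − 1} − S_{τ_0^-}} ] ≤ c. -/

import Mathlib

open MeasureTheory ProbabilityTheory Filter Topology Real
open scoped ENNReal NNReal

variable {Ω : Type*} [MeasurableSpace Ω]
set_option linter.unusedSectionVars false
set_option maxHeartbeats 1000000

/-- The random walk started at `x` with increments `X`. -/
noncomputable def walk (X : ℕ → Ω → ℝ) (x : ℝ) (n : ℕ) (ω : Ω) : ℝ :=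
  x + ∑ i ∈ Finset.range n, X i ω

/-- `τ_a^+`: the first time the walk (started at `x`) exceeds level `a`, as an
extended natural number (`⊤` if the walk never exceeds `a`). -/
noncomputable def hitAbove (X : ℕ → Ω → ℝ) (x a : ℝ) (ω : Ω) : ℕ∞ :=
  ⨅ (n : ℕ) (_ : a < walk X x n ω), (n : ℕ∞)

/-- `τ_a^-`: the first time the walk (started at `x`) goes below level `a`. -/
noncomputable def hitBelow (X : ℕ → Ω → ℝ) (x a : ℝ) (ω : Ω) : ℕ∞ :=
  ⨅ (n : ℕ) (_ : walk X x n ω < a), (n : ℕ∞)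

/-- `S_{τ_a^+}`: the walk stopped when it first exceeds `a` (junk value if never). -/
noncomputable def stopAbove (X : ℕ → Ω → ℝ) (x a : ℝ) (ω : Ω) : ℝ :=
  walk X x (hitAbove X x a ω).toNat ω

/-- `S_{τ_a^-}`: the walk stopped when it first goes below `a` (junk value if never). -/
noncomputable def stopBelow (X : ℕ → Ω → ℝ) (x a : ℝ) (ω : Ω) : ℝ :=
  walk X x (hitBelow X x a ω).toNat ω

/-- A real random variable has non-arithmetic distribution: its law is not
supported on any lattice `hℤ`. -/
def NonArithmetic (Y : Ω → ℝ) (μ : Measure Ω) : Prop :=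
  ¬ ∃ h : ℝ, ∀ᵐ ω ∂μ, ∃ k : ℤ, Y ω = k * h


lemma walk_succ (X : ℕ → Ω → ℝ) (x : ℝ) (n : ℕ) (ω : Ω) :
    walk X x (n + 1) ω = walk X x n ω + X n ω := by
  simp [walk, Finset.sum_range_succ, add_assoc]

lemma walk_zero (X : ℕ → Ω → ℝ) (x : ℝ) (ω : Ω) : walk X x 0 ω = x := by simp [walk]

lemma hitBelow_le_iff {X : ℕ → Ω → ℝ} {x a : ℝ} {ω : Ω} {n : ℕ} :
    hitBelow X x a ω ≤ (n : ℕ∞) ↔ ∃ k ≤ n, walk X x k ω < a := by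
  constructor
  · intro h
    by_contra hc
    push_neg at hc
    have : (n + 1 : ℕ∞) ≤ hitBelow X x a ω := by
      refine le_iInf fun k => le_iInf fun hk => ?_
      have : n < k := by
        by_contra hkn
        exact absurd hk (not_lt.mpr (hc k (not_lt.mp hkn)))
      exact_mod_cast Nat.succ_le_of_lt this
    have h2 : ((n+1 : ℕ) : ℕ∞) ≤ (n : ℕ∞) := by exact_mod_cast this.trans h
    have : n + 1 ≤ n := by exact_mod_cast h2
    omega
  · rintro ⟨k, hk, hw⟩
    exact le_trans (iInf_le_of_le k (iInf_le_of_le hw le_rfl)) (by exact_mod_cast hk)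

lemma lt_hitBelow_iff {X : ℕ → Ω → ℝ} {x a : ℝ} {ω : Ω} {n : ℕ} :
    (n : ℕ∞) < hitBelow X x a ω ↔ ∀ k ≤ n, a ≤ walk X x k ω := by
  rw [← not_le, hitBelow_le_iff]
  push_neg
  rfl

lemma hitBelow_eq_coe_iff {X : ℕ → Ω → ℝ} {x a : ℝ} {ω : Ω} {n : ℕ} :
    hitBelow X x a ω = (n : ℕ∞) ↔ (walk X x n ω < a ∧ ∀ k < n, a ≤ walk X x k ω) := by
  constructor
  · intro h
    have h1 : hitBelow X x a ω ≤ (n : ℕ∞) := le_of_eq h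
    rw [hitBelow_le_iff] at h1
    obtain ⟨k, hk, hw⟩ := h1
    have hnk : (k : ℕ∞) < hitBelow X x a ω ↔ _ := lt_hitBelow_iff (n := k)
    constructor
    · by_contra hw'
      -- then hitBelow ≤ k < n? use: k with walk < a gives hitBelow ≤ k
      have hle : hitBelow X x a ω ≤ (k : ℕ∞) := hitBelow_le_iff.mpr ⟨k, le_rfl, hw⟩
      rw [h] at hle
      have : n ≤ k := by exact_mod_cast hle
      have : k = n := le_antisymm hk this
      exact hw' (this ▸ hw)
    · intro j hj
      by_contra hw'
      push_neg at hw'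
      have hle : hitBelow X x a ω ≤ (j : ℕ∞) := hitBelow_le_iff.mpr ⟨j, le_rfl, hw'⟩
      rw [h] at hle
      have : n ≤ j := by exact_mod_cast hle
      omega
  · rintro ⟨hw, hprev⟩
    refine le_antisymm (hitBelow_le_iff.mpr ⟨n, le_rfl, hw⟩) ?_
    refine le_iInf fun k => le_iInf fun hk => ?_
    have : n ≤ k := by
      by_contra hkn
      exact absurd hk (not_lt.mpr (hprev k (not_le.mp hkn)))
    exact_mod_cast this

lemma int_exp_gt_one (μ : Measure Ω) [IsProbabilityMeasure μ] (Y : Ω → ℝ)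
    (δ : ℝ) (hδ : 0 < δ)
    (hint : Integrable Y μ) (hcent : ∫ ω, Y ω ∂μ = 0)
    (hEδ : Integrable (fun ω => Real.exp (-(δ * Y ω))) μ)
    (hne : ¬ (Y =ᵐ[μ] fun _ => 0)) : 1 < ∫ ω, Real.exp (-(δ * Y ω)) ∂μ := by
  set φ : Ω → ℝ := fun ω => Real.exp (-(δ * Y ω)) - 1 + δ * Y ω with hφdef
  have hφint : Integrable φ μ := (hEδ.sub (integrable_const 1)).add (hint.const_mul δ)
  have hφnn : ∀ ω, 0 ≤ φ ω := by
    intro ω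
    have := Real.add_one_le_exp (-(δ * Y ω))
    simp only [hφdef]
    linarith
  have hφint_eq : ∫ ω, φ ω ∂μ = (∫ ω, Real.exp (-(δ * Y ω)) ∂μ) - 1 := by
    have ia : Integrable (fun ω => Real.exp (-(δ * Y ω)) - 1) μ := hEδ.sub (integrable_const 1)
    have ib : Integrable (fun ω => δ * Y ω) μ := hint.const_mul δ
    rw [hφdef]
    rw [integral_add ia ib, integral_sub hEδ (integrable_const 1), integral_const_mul, hcent]
    simp
  rcases lt_or_ge 1 (∫ ω, Real.exp (-(δ * Y ω)) ∂μ) with h | h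
  · exact h
  · exfalso
    have h0 : ∫ ω, φ ω ∂μ ≤ 0 := by rw [hφint_eq]; linarith
    have h1 : 0 ≤ ∫ ω, φ ω ∂μ := integral_nonneg hφnn
    have h2 : ∫ ω, φ ω ∂μ = 0 := le_antisymm h0 h1
    have h3 : φ =ᵐ[μ] 0 :=
      (integral_eq_zero_iff_of_nonneg hφnn hφint).mp h2
    apply hne
    filter_upwards [h3] with ω hω
    by_contra hY0
    have hyne : -(δ * Y ω) ≠ 0 := by
      simp only [ne_eq, neg_eq_zero, mul_eq_zero, not_or]
      exact ⟨hδ.ne', hY0⟩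
    have := Real.add_one_lt_exp hyne
    have : 0 < φ ω := by simp only [hφdef]; linarith
    rw [hω] at this
    exact lt_irrefl _ this

lemma not_ae_zero_of_var_pos (μ : Measure Ω) [IsProbabilityMeasure μ] (Y : Ω → ℝ)
    (hvar : 0 < variance Y μ) : ¬ (Y =ᵐ[μ] fun _ => 0) := by
  intro h
  have hmean : ∫ ω, Y ω ∂μ = 0 := by
    rw [integral_congr_ae h]; simp
  have : evariance Y μ = 0 := by
    rw [evariance]
    rw [lintegral_eq_zero_iff' ((((aemeasurable_congr h).mpr aemeasurable_const).sub_const _).enorm.pow_const _)]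
    filter_upwards [h] with ω hω
    simp [hω, hmean]
  rw [variance, this] at hvar
  simp at hvar

lemma supersolution (μ : Measure Ω) [IsProbabilityMeasure μ] (Y : Ω → ℝ) (hY : Measurable Y)
    (δ : ℝ) (hδ : 0 < δ)
    (hEδ : Integrable (fun ω => Real.exp (-(δ * Y ω))) μ)
    (hE2δ : Integrable (fun ω => Real.exp (-(2 * δ * Y ω))) μ)
    (hκ : 1 < ∫ ω, Real.exp (-(δ * Y ω)) ∂μ) :
    ∃ A B : ℝ, 0 < B ∧ B ≤ A ∧ ∀ b : ℝ, 0 ≤ b →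
      Real.exp (-(δ * b)) +
        ∫ ω, (if 0 ≤ b + Y ω then A - B * Real.exp (-(δ * (b + Y ω))) else 0) ∂μ
        ≤ A - B * Real.exp (-(δ * b)) := by
  classical
  set M : ℝ := ∫ ω, Real.exp (-(δ * Y ω)) ∂μ with hM
  set κ : ℝ := M - 1 with hκdef
  have hκpos : 0 < κ := by simp [hκdef]; linarith
  set M₂ : ℝ := ∫ ω, Real.exp (-(2 * δ * Y ω)) ∂μ with hM₂
  have hM₂pos : 0 < M₂ := integral_exp_pos hE2δ
  set R : ℝ := max 0 (Real.log (4 * M₂ / κ) / δ) with hRdef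
  have hR0 : 0 ≤ R := le_max_left _ _
  have hRtail : M₂ * Real.exp (-(δ * R)) ≤ κ / 4 := by
    have hlog : Real.log (4 * M₂ / κ) ≤ δ * R := by
      have h1 : Real.log (4 * M₂ / κ) / δ ≤ R := le_max_right _ _
      calc Real.log (4 * M₂ / κ) = δ * (Real.log (4 * M₂ / κ) / δ) := by
            field_simp
        _ ≤ δ * R := by nlinarith
    have hx : (0:ℝ) < 4 * M₂ / κ := by positivity
    have h2 : Real.exp (-(δ * R)) ≤ κ / (4 * M₂) := by
      have h3 : Real.exp (-(δ * R)) ≤ Real.exp (-(Real.log (4 * M₂ / κ))) :=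
        Real.exp_le_exp.mpr (by linarith)
      have h4 : Real.exp (-(Real.log (4 * M₂ / κ))) = (4 * M₂ / κ)⁻¹ := by
        rw [Real.exp_neg, Real.exp_log hx]
      rw [h4] at h3
      calc Real.exp (-(δ * R)) ≤ (4 * M₂ / κ)⁻¹ := h3
        _ = κ / (4 * M₂) := by rw [inv_div]
    calc M₂ * Real.exp (-(δ * R)) ≤ M₂ * (κ / (4 * M₂)) := by nlinarith
      _ = κ / 4 := by field_simp
  set B : ℝ := 2 / κ with hBdef
  have hBpos : 0 < B := by positivity
  have hBκ : B * κ = 2 := by rw [hBdef]; field_simp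
  set A : ℝ := max B (2 * B * Real.exp (δ * R)) with hAdef
  have hAB : B ≤ A := le_max_left _ _
  have hA2 : 2 * B * Real.exp (δ * R) ≤ A := le_max_right _ _
  have hApos : 0 < A := lt_of_lt_of_le hBpos hAB
  refine ⟨A, B, hBpos, hAB, ?_⟩
  intro b hb
  set s : Set Ω := {ω | b + Y ω < 0} with hsdef
  have hsmeas : MeasurableSet s := measurableSet_lt (by fun_prop) measurable_const
  set q : ℝ := ∫ ω, Set.indicator s (fun _ => (1:ℝ)) ω ∂μ with hq
  set J : ℝ := ∫ ω, Set.indicator s (fun ω => Real.exp (-(δ * Y ω))) ω ∂μ with hJ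
  have hqint : Integrable (Set.indicator s fun _ => (1:ℝ)) μ :=
    (integrable_const (1:ℝ)).indicator hsmeas
  have hJint : Integrable (Set.indicator s fun ω => Real.exp (-(δ * Y ω))) μ :=
    hEδ.indicator hsmeas
  have hqnonneg : 0 ≤ q := integral_nonneg fun ω => Set.indicator_nonneg (fun _ _ => zero_le_one) ω
  have hJnonneg : 0 ≤ J :=
    integral_nonneg fun ω => Set.indicator_nonneg (fun _ _ => (Real.exp_pos _).le) ω
  have hq1 : q ≤ 1 := by
    rw [hq]
    calc ∫ ω, Set.indicator s (fun _ => (1:ℝ)) ω ∂μ ≤ ∫ _ω, (1:ℝ) ∂μ := by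
          apply integral_mono hqint (integrable_const 1)
          intro ω
          exact Set.indicator_le_self' (fun _ _ => zero_le_one) ω
      _ = 1 := by simp
  -- the tail bound
  have hJq : J ≤ Real.exp (δ * R) * q + κ / 4 := by
    have hpoint : ∀ ω, Set.indicator s (fun ω => Real.exp (-(δ * Y ω))) ω ≤
        Real.exp (δ * R) * Set.indicator s (fun _ => (1:ℝ)) ω
          + Real.exp (-(δ * R)) * Real.exp (-(2 * δ * Y ω)) := by
      intro ω
      by_cases hωs : ω ∈ s
      · rw [Set.indicator_of_mem hωs, Set.indicator_of_mem hωs]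
        rcases le_or_gt (-R) (Y ω) with hc | hc
        · have h1 : Real.exp (-(δ * Y ω)) ≤ Real.exp (δ * R) := by
            apply Real.exp_le_exp.mpr; nlinarith
          nlinarith [Real.exp_pos (-(δ * R)), Real.exp_pos (-(2 * δ * Y ω))]
        · have h1 : Real.exp (-(δ * Y ω)) ≤ Real.exp (-(δ * R)) * Real.exp (-(2 * δ * Y ω)) := by
            rw [← Real.exp_add]
            apply Real.exp_le_exp.mpr; nlinarith
          nlinarith [Real.exp_pos (δ * R)]
      · rw [Set.indicator_of_notMem hωs, Set.indicator_of_notMem hωs]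
        positivity
    have hint : J ≤ ∫ ω, (Real.exp (δ * R) * Set.indicator s (fun _ => (1:ℝ)) ω
        + Real.exp (-(δ * R)) * Real.exp (-(2 * δ * Y ω))) ∂μ := by
      apply integral_mono hJint _ hpoint
      exact (hqint.const_mul _).add (hE2δ.const_mul _)
    rw [integral_add (hqint.const_mul _) (hE2δ.const_mul _), integral_const_mul,
      integral_const_mul] at hint
    calc J ≤ Real.exp (δ * R) * q + Real.exp (-(δ * R)) * M₂ := hint
      _ ≤ Real.exp (δ * R) * q + κ / 4 := by nlinarith
  set E : ℝ := Real.exp (-(δ * b)) with hE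
  have hEpos : 0 < E := Real.exp_pos _
  have hE1 : E ≤ 1 := by
    rw [hE]
    exact Real.exp_le_one_iff.mpr (by nlinarith)
  -- compute the integral
  have hcomp : (∫ ω, (if 0 ≤ b + Y ω then A - B * Real.exp (-(δ * (b + Y ω))) else 0) ∂μ)
      = A * (1 - q) - B * E * (M - J) := by
    have hpt : ∀ ω, (if 0 ≤ b + Y ω then A - B * Real.exp (-(δ * (b + Y ω))) else 0)
        = A * (1 - Set.indicator s (fun _ => (1:ℝ)) ω)
          - B * E * (Real.exp (-(δ * Y ω)) - Set.indicator s (fun ω => Real.exp (-(δ * Y ω))) ω) := by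
      intro ω
      by_cases hωs : ω ∈ s
      · have : ¬ (0 ≤ b + Y ω) := not_le.mpr hωs
        rw [if_neg this, Set.indicator_of_mem hωs, Set.indicator_of_mem hωs]
        ring
      · have h0 : 0 ≤ b + Y ω := not_lt.mp hωs
        rw [if_pos h0, Set.indicator_of_notMem hωs, Set.indicator_of_notMem hωs]
        have h1 : -(δ * (b + Y ω)) = -(δ * b) + -(δ * Y ω) := by ring
        rw [hE, h1, Real.exp_add]
        ring
    calc (∫ ω, (if 0 ≤ b + Y ω then A - B * Real.exp (-(δ * (b + Y ω))) else 0) ∂μ)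
        = ∫ ω, (A * (1 - Set.indicator s (fun _ => (1:ℝ)) ω)
          - B * E * (Real.exp (-(δ * Y ω)) - Set.indicator s (fun ω => Real.exp (-(δ * Y ω))) ω)) ∂μ :=
          integral_congr_ae (Filter.Eventually.of_forall hpt)
      _ = A * (1 - q) - B * E * (M - J) := by
        have i1 : Integrable (fun ω => A * (1 - Set.indicator s (fun _ => (1:ℝ)) ω)) μ :=
          ((integrable_const (1:ℝ)).sub hqint).const_mul A
        have i2 : Integrable (fun ω => B * E *
            (Real.exp (-(δ * Y ω)) - Set.indicator s (fun ω => Real.exp (-(δ * Y ω))) ω)) μ :=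
          (hEδ.sub hJint).const_mul (B * E)
        rw [integral_sub i1 i2, integral_const_mul, integral_const_mul,
          integral_sub (integrable_const 1) hqint, integral_sub hEδ hJint]
        have h1 : ∫ (_ : Ω), (1:ℝ) ∂μ = 1 := by simp
        rw [h1, ← hM, ← hq, ← hJ]
  rw [hcomp]
  have hBM : B * M = B + 2 := by
    have hMeq : M = 1 + κ := by rw [hκdef]; ring
    rw [hMeq]; linear_combination hBκ
  clear_value M κ M₂ R B A q J E
  have hBME : B * E * M = B * E + 2 * E := by linear_combination E * hBM
  clear hq hJ hM hM₂ hqint hJint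
  -- the key claim
  have key : E * (B * J - 1) ≤ A * q := by
    rcases le_or_gt (B * J) 1 with hc | hc
    · have h1 : E * (B * J - 1) ≤ 0 :=
        mul_nonpos_of_nonneg_of_nonpos hEpos.le (by linarith)
      have h2 : 0 ≤ A * q := mul_nonneg hApos.le hqnonneg
      linarith
    · have hJhalf : κ / 2 < J := by nlinarith
      have hqlow : κ / 4 * Real.exp (-(δ * R)) < q := by
        have h1 : κ / 4 < Real.exp (δ * R) * q := by nlinarith
        have h2 : Real.exp (-(δ * R)) * Real.exp (δ * R) = 1 := by
          rw [← Real.exp_add]; simp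
        nlinarith [Real.exp_pos (-(δ * R))]
      have hL1 : E * (B * J - 1) ≤ B * J - 1 := by nlinarith
      have hL2 : B * J ≤ B * Real.exp (δ * R) * q + 1 / 2 := by nlinarith
      have hhalf : 1 / 2 < B * Real.exp (δ * R) * q := by
        have h3 : B * Real.exp (δ * R) * (κ / 4 * Real.exp (-(δ * R))) = 1 / 2 := by
          have h2 : Real.exp (δ * R) * Real.exp (-(δ * R)) = 1 := by
            rw [← Real.exp_add]; simp
          nlinarith
        nlinarith [Real.exp_pos (δ * R)]
      have hfin : E * (B * J - 1) < A * q := by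
        calc E * (B * J - 1) ≤ B * J - 1 := hL1
          _ < 2 * B * Real.exp (δ * R) * q := by nlinarith
          _ ≤ A * q := by nlinarith
      exact hfin.le
  nlinarith [key, hBME]

lemma walk_measurable (X : ℕ → Ω → ℝ) (hmeas : ∀ i, Measurable (X i)) (x : ℝ) (n : ℕ) :
    Measurable (fun ω => walk X x n ω) := by
  unfold walk
  exact measurable_const.add (Finset.measurable_sum _ fun i _ => hmeas i)

noncomputable def Ypr (X : ℕ → Ω → ℝ) (a : ℝ) (n : ℕ) (ω : Ω) : ℝ :=
  if (∀ k ≤ n, 0 ≤ walk X a k ω) then walk X a n ω else -1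

lemma Ypr_measurable (X : ℕ → Ω → ℝ) (hmeas : ∀ i, Measurable (X i)) (a : ℝ) (n : ℕ) :
    Measurable (Ypr X a n) := by
  unfold Ypr
  apply Measurable.ite _ (walk_measurable X hmeas a n) measurable_const
  have hEq : {ω | ∀ k ≤ n, 0 ≤ walk X a k ω}
      = ⋂ k ∈ Set.Iic n, {ω | 0 ≤ walk X a k ω} := by
    ext ω; simp [Set.mem_iInter]
  rw [hEq]
  exact MeasurableSet.biInter (Set.to_countable _)
    fun k _ => measurableSet_le measurable_const (walk_measurable X hmeas a k)

noncomputable def phi1 (δ : ℝ) (b : ℝ) : ℝ≥0∞ :=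
  if 0 ≤ b then ENNReal.ofReal (Real.exp (-(δ * b))) else 0

noncomputable def phig (δ A B : ℝ) (b : ℝ) : ℝ≥0∞ :=
  if 0 ≤ b then ENNReal.ofReal (A - B * Real.exp (-(δ * b))) else 0

lemma phi1_measurable (δ : ℝ) : Measurable (phi1 δ) := by
  unfold phi1
  exact Measurable.ite measurableSet_Ici
    ((Real.continuous_exp.comp (continuous_const.mul continuous_id).neg).measurable.ennreal_ofReal)
    measurable_const

lemma phig_measurable (δ A B : ℝ) : Measurable (phig δ A B) := by
  unfold phig
  exact Measurable.ite measurableSet_Ici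
    ((continuous_const.sub (continuous_const.mul
      (Real.continuous_exp.comp (continuous_const.mul continuous_id).neg))).measurable.ennreal_ofReal)
    measurable_const



lemma indep_Ypr (μ : Measure Ω) (X : ℕ → Ω → ℝ) (hmeas : ∀ i, Measurable (X i))
    (hindep : iIndepFun X μ) (a : ℝ) (n : ℕ) :
    IndepFun (fun ω => if (∀ k ≤ n, 0 ≤ walk X a k ω) then walk X a n ω else -1) (X n) μ := by
  classical
  have hdisj : Disjoint (Finset.range n) ({n} : Finset ℕ) := by
    simp [Finset.disjoint_singleton_right]
  have hbase := hindep.indepFun_finset (Finset.range n) {n} hdisj hmeas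
  set w : (↥(Finset.range n) → ℝ) → ℕ → ℝ :=
    fun v j => if h : j ∈ Finset.range n then v ⟨j, h⟩ else 0 with hwdef
  have hwmeas : ∀ j, Measurable (fun v => w v j) := by
    intro j
    simp only [hwdef]
    by_cases h : j ∈ Finset.range n
    · simp only [dif_pos h]; exact measurable_pi_apply _
    · simp only [dif_neg h]; exact measurable_const
  have hsummeas : ∀ k, Measurable (fun v => a + ∑ i ∈ Finset.range k, w v i) := by
    intro k
    exact measurable_const.add (Finset.measurable_sum _ fun i _ => hwmeas i)
  set F : (↥(Finset.range n) → ℝ) → ℝ :=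
    fun v => if (∀ k ≤ n, 0 ≤ a + ∑ i ∈ Finset.range k, w v i)
      then a + ∑ i ∈ Finset.range n, w v i else -1 with hFdef
  have hFmeas : Measurable F := by
    apply Measurable.ite _ (hsummeas n) measurable_const
    have hEq : {v | ∀ k ≤ n, 0 ≤ a + ∑ i ∈ Finset.range k, w v i}
        = ⋂ k ∈ Set.Iic n, {v | 0 ≤ a + ∑ i ∈ Finset.range k, w v i} := by
      ext v; simp [Set.mem_iInter]
    rw [hEq]
    exact MeasurableSet.biInter (Set.to_countable _)
      fun k _ => measurableSet_le measurable_const (hsummeas k)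
  set ψ : (↥({n} : Finset ℕ) → ℝ) → ℝ := fun v => v ⟨n, by simp⟩ with hψdef
  have hψmeas : Measurable ψ := measurable_pi_apply _
  have hcomp := hbase.comp hFmeas hψmeas
  have h1 : (F ∘ fun ω (i : ↥(Finset.range n)) => X i ω)
      = fun ω => if (∀ k ≤ n, 0 ≤ walk X a k ω) then walk X a n ω else -1 := by
    funext ω
    have hs : ∀ k, k ≤ n →
        (a + ∑ i ∈ Finset.range k, w (fun (i : ↥(Finset.range n)) => X i ω) i)
          = walk X a k ω := by
      intro k hk
      unfold walk
      congr 1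
      apply Finset.sum_congr rfl
      intro i hi
      have him : i ∈ Finset.range n :=
        Finset.mem_range.mpr (lt_of_lt_of_le (Finset.mem_range.mp hi) hk)
      simp only [hwdef]
      rw [dif_pos him]
    have hcond : (∀ k ≤ n, 0 ≤ a + ∑ i ∈ Finset.range k,
        w (fun (i : ↥(Finset.range n)) => X i ω) i)
          ↔ (∀ k ≤ n, 0 ≤ walk X a k ω) :=
      forall_congr' fun k => imp_congr_right fun hk => by rw [hs k hk]
    simp only [Function.comp_apply, hFdef]
    rw [if_congr hcond (hs n le_rfl) rfl]
  have h2 : (ψ ∘ fun ω (i : ↥({n} : Finset ℕ)) => X i ω) = X n := rfl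
  rw [h1, h2] at hcomp
  exact hcomp

lemma step_ineq (μ : Measure Ω) [IsProbabilityMeasure μ]
    (X : ℕ → Ω → ℝ) (hmeas : ∀ i, Measurable (X i))
    (hindep : iIndepFun X μ)
    (hident : ∀ i, IdentDistrib (X i) (X 0) μ μ)
    (a : ℝ) (δ A B : ℝ) (hδ : 0 < δ) (hBpos : 0 < B) (hAB : B ≤ A)
    (hsuper : ∀ b : ℝ, 0 ≤ b →
      Real.exp (-(δ * b)) +
        ∫ ω, (if 0 ≤ b + X 0 ω then A - B * Real.exp (-(δ * (b + X 0 ω))) else 0) ∂μ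
        ≤ A - B * Real.exp (-(δ * b)))
    (n : ℕ) :
    (∫⁻ ω, phig δ A B (Ypr X a (n+1) ω) ∂μ) + (∫⁻ ω, phi1 δ (Ypr X a n ω) ∂μ)
      ≤ ∫⁻ ω, phig δ A B (Ypr X a n ω) ∂μ := by
  classical
  set Θ : ℝ × ℝ → ℝ≥0∞ := fun p =>
    (if 0 ≤ p.1 ∧ 0 ≤ p.1 + p.2 then ENNReal.ofReal (A - B * Real.exp (-(δ * (p.1 + p.2)))) else 0)
      + phi1 δ p.1 with hΘdef
  have hΘmeas : Measurable Θ := by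
    apply Measurable.add
    · apply Measurable.ite
      · exact (measurableSet_le measurable_const measurable_fst).inter
          (measurableSet_le measurable_const (measurable_fst.add measurable_snd))
      · exact (continuous_const.sub (continuous_const.mul (Real.continuous_exp.comp
          (continuous_const.mul (continuous_fst.add continuous_snd)).neg))).measurable.ennreal_ofReal
      · exact measurable_const
    · exact (phi1_measurable δ).comp measurable_fst
  -- pointwise identity
  have hpt : ∀ ω, phig δ A B (Ypr X a (n+1) ω) + phi1 δ (Ypr X a n ω)
      = Θ (Ypr X a n ω, X n ω) := by
    intro ω
    by_cases hTn : ∀ k ≤ n, 0 ≤ walk X a k ω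
    · have hYn : Ypr X a n ω = walk X a n ω := if_pos hTn
      have hwn : 0 ≤ walk X a n ω := hTn n le_rfl
      by_cases h1 : 0 ≤ walk X a (n+1) ω
      · have hTn1 : ∀ k ≤ n + 1, 0 ≤ walk X a k ω := by
          intro k hk
          rcases Nat.lt_or_ge k (n+1) with h | h
          · exact hTn k (Nat.lt_succ_iff.mp h)
          · have : k = n + 1 := le_antisymm hk h
            rw [this]; exact h1
        have hYn1 : Ypr X a (n+1) ω = walk X a (n+1) ω := if_pos hTn1
        simp only [hΘdef, hYn, hYn1, phig]
        rw [if_pos h1, if_pos ⟨hwn, by rw [← walk_succ]; exact h1⟩, ← walk_succ]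
      · have hTn1 : ¬ (∀ k ≤ n + 1, 0 ≤ walk X a k ω) := by
          intro h; exact h1 (h (n+1) le_rfl)
        have hYn1 : Ypr X a (n+1) ω = -1 := if_neg hTn1
        simp only [hΘdef, hYn, hYn1, phig]
        rw [if_neg (by norm_num : ¬ (0:ℝ) ≤ -1),
          if_neg (by rw [← walk_succ]; exact fun h => h1 h.2)]
    · have hYn : Ypr X a n ω = -1 := if_neg hTn
      have hTn1 : ¬ (∀ k ≤ n + 1, 0 ≤ walk X a k ω) := by
        intro h; exact hTn fun k hk => h k (hk.trans (Nat.le_succ n))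
      have hYn1 : Ypr X a (n+1) ω = -1 := if_neg hTn1
      simp only [hΘdef, hYn, hYn1, phig, phi1]
      rw [if_neg (by norm_num : ¬ (0:ℝ) ≤ -1), if_neg (by norm_num : ¬ (0:ℝ) ≤ -1),
        if_neg (fun h => (by norm_num : ¬ (0:ℝ) ≤ -1) h.1)]
  -- inner integral bound
  haveI hprob0 : IsProbabilityMeasure (μ.map (X 0)) :=
    Measure.isProbabilityMeasure_map (hmeas 0).aemeasurable
  have hinner : ∀ b : ℝ, ∫⁻ x, Θ (b, x) ∂(μ.map (X n)) ≤ phig δ A B b := by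
    intro b
    rw [(hident n).map_eq]
    by_cases hb : 0 ≤ b
    · have hconst : ∀ x : ℝ, Θ (b, x) =
          (if 0 ≤ b + x then ENNReal.ofReal (A - B * Real.exp (-(δ * (b + x)))) else 0)
            + ENNReal.ofReal (Real.exp (-(δ * b))) := by
        intro x
        simp only [hΘdef, phi1]
        rw [if_pos hb, if_congr (and_iff_right hb) rfl rfl]
      have hmeas1 : Measurable (fun x : ℝ =>
          (if 0 ≤ b + x then ENNReal.ofReal (A - B * Real.exp (-(δ * (b + x)))) else 0)) := by
        apply Measurable.ite
        · exact measurableSet_le measurable_const (measurable_const.add measurable_id)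
        · exact (continuous_const.sub (continuous_const.mul (Real.continuous_exp.comp
            (continuous_const.mul (continuous_const.add continuous_id)).neg))).measurable.ennreal_ofReal
        · exact measurable_const
      calc ∫⁻ x, Θ (b, x) ∂(μ.map (X 0))
          = ∫⁻ x, ((if 0 ≤ b + x then ENNReal.ofReal (A - B * Real.exp (-(δ * (b + x)))) else 0)
              + ENNReal.ofReal (Real.exp (-(δ * b)))) ∂(μ.map (X 0)) :=
            lintegral_congr hconst
        _ = (∫⁻ x, (if 0 ≤ b + x then ENNReal.ofReal (A - B * Real.exp (-(δ * (b + x)))) else 0)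
              ∂(μ.map (X 0))) + ENNReal.ofReal (Real.exp (-(δ * b))) := by
            rw [lintegral_add_right _ measurable_const, lintegral_const, measure_univ, mul_one]
        _ = (∫⁻ ω, (if 0 ≤ b + X 0 ω then
              ENNReal.ofReal (A - B * Real.exp (-(δ * (b + X 0 ω)))) else 0) ∂μ)
              + ENNReal.ofReal (Real.exp (-(δ * b))) := by
            rw [lintegral_map hmeas1 (hmeas 0)]
        _ = ENNReal.ofReal (∫ ω, (if 0 ≤ b + X 0 ω then
              A - B * Real.exp (-(δ * (b + X 0 ω))) else 0) ∂μ)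
              + ENNReal.ofReal (Real.exp (-(δ * b))) := by
            congr 1
            have hmbase : Measurable (fun ω =>
                (if 0 ≤ b + X 0 ω then A - B * Real.exp (-(δ * (b + X 0 ω))) else 0)) := by
              apply Measurable.ite
              · exact measurableSet_le measurable_const (measurable_const.add (hmeas 0))
              · exact measurable_const.sub (measurable_const.mul
                  (Real.measurable_exp.comp (measurable_const.mul
                    (measurable_const.add (hmeas 0))).neg))
              · exact measurable_const
            have hint : Integrable (fun ω =>
                (if 0 ≤ b + X 0 ω then A - B * Real.exp (-(δ * (b + X 0 ω))) else 0)) μ := by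
              apply Integrable.mono' (integrable_const A) hmbase.aestronglyMeasurable
              filter_upwards with ω
              by_cases h : 0 ≤ b + X 0 ω
              · rw [if_pos h]
                have he : Real.exp (-(δ * (b + X 0 ω))) ≤ 1 :=
                  Real.exp_le_one_iff.mpr (by nlinarith)
                have hBe : 0 < B * Real.exp (-(δ * (b + X 0 ω))) :=
                  mul_pos hBpos (Real.exp_pos _)
                have hBe1 : B * Real.exp (-(δ * (b + X 0 ω))) ≤ B := by nlinarith
                have hge : 0 ≤ A - B * Real.exp (-(δ * (b + X 0 ω))) := by linarith
                rw [Real.norm_eq_abs, abs_of_nonneg hge]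
                linarith
              · rw [if_neg h]
                simp only [norm_zero]
                linarith
            have hnn : 0 ≤ᵐ[μ] fun ω =>
                (if 0 ≤ b + X 0 ω then A - B * Real.exp (-(δ * (b + X 0 ω))) else 0) := by
              filter_upwards with ω
              simp only [Pi.zero_apply]
              by_cases h : 0 ≤ b + X 0 ω
              · rw [if_pos h]
                have he : Real.exp (-(δ * (b + X 0 ω))) ≤ 1 :=
                  Real.exp_le_one_iff.mpr (by nlinarith)
                nlinarith [Real.exp_pos (-(δ * (b + X 0 ω)))]
              · rw [if_neg h]
            have hfe : (fun ω => (if 0 ≤ b + X 0 ω then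
                ENNReal.ofReal (A - B * Real.exp (-(δ * (b + X 0 ω)))) else 0))
                = fun ω => ENNReal.ofReal
                  (if 0 ≤ b + X 0 ω then A - B * Real.exp (-(δ * (b + X 0 ω))) else 0) :=
              funext fun ω => by rw [apply_ite ENNReal.ofReal, ENNReal.ofReal_zero]
            rw [hfe]
            exact (ofReal_integral_eq_lintegral_ofReal hint hnn).symm
        _ ≤ ENNReal.ofReal (A - B * Real.exp (-(δ * b))) := by
            rw [← ENNReal.ofReal_add (integral_nonneg ?hnn) (Real.exp_pos _).le]
            · apply ENNReal.ofReal_le_ofReal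
              have := hsuper b hb
              linarith
            case hnn =>
              intro ω
              simp only [Pi.zero_apply]
              by_cases h : 0 ≤ b + X 0 ω
              · simp only [if_pos h]
                have he : Real.exp (-(δ * (b + X 0 ω))) ≤ 1 :=
                  Real.exp_le_one_iff.mpr (by nlinarith)
                have hBe1 : B * Real.exp (-(δ * (b + X 0 ω))) ≤ B := by nlinarith
                linarith
              · simp only [if_neg h]; exact le_rfl
        _ = phig δ A B b := by rw [phig, if_pos hb]
    · have hzero : ∀ x : ℝ, Θ (b, x) = 0 := by
        intro x
        simp only [hΘdef, phi1]
        rw [if_neg (fun h => hb h.1), if_neg hb, add_zero]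
      rw [lintegral_congr hzero]
      simp [phig, hb]
  -- assemble
  have hYmeas := Ypr_measurable X hmeas a
  have hpair : Measurable (fun ω => (Ypr X a n ω, X n ω)) := (hYmeas n).prodMk (hmeas n)
  have hmap : μ.map (fun ω => (Ypr X a n ω, X n ω))
      = (μ.map (Ypr X a n)).prod (μ.map (X n)) :=
    (indepFun_iff_map_prod_eq_prod_map_map (hYmeas n).aemeasurable (hmeas n).aemeasurable).mp
      (indep_Ypr μ X hmeas hindep a n)
  haveI : IsProbabilityMeasure (μ.map (X n)) := Measure.isProbabilityMeasure_map (hmeas n).aemeasurable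
  haveI : IsProbabilityMeasure (μ.map (Ypr X a n)) :=
    Measure.isProbabilityMeasure_map (hYmeas n).aemeasurable
  calc (∫⁻ ω, phig δ A B (Ypr X a (n+1) ω) ∂μ) + (∫⁻ ω, phi1 δ (Ypr X a n ω) ∂μ)
      = ∫⁻ ω, (phig δ A B (Ypr X a (n+1) ω) + phi1 δ (Ypr X a n ω)) ∂μ := by
        have hm1 : Measurable (fun ω => phig δ A B (Ypr X a (n+1) ω)) :=
          (phig_measurable δ A B).comp (hYmeas (n+1))
        rw [lintegral_add_left hm1]
    _ = ∫⁻ ω, Θ (Ypr X a n ω, X n ω) ∂μ := lintegral_congr hpt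
    _ = ∫⁻ p, Θ p ∂(μ.map (fun ω => (Ypr X a n ω, X n ω))) := (lintegral_map hΘmeas hpair).symm
    _ = ∫⁻ p, Θ p ∂((μ.map (Ypr X a n)).prod (μ.map (X n))) := by rw [hmap]
    _ = ∫⁻ b, ∫⁻ x, Θ (b, x) ∂(μ.map (X n)) ∂(μ.map (Ypr X a n)) :=
        lintegral_prod Θ hΘmeas.aemeasurable
    _ ≤ ∫⁻ b, phig δ A B b ∂(μ.map (Ypr X a n)) := lintegral_mono hinner
    _ = ∫⁻ ω, phig δ A B (Ypr X a n ω) ∂μ := lintegral_map (phig_measurable δ A B) (hYmeas n)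

/-- Lemma `lem:estcrit`, (diftau0). For a centered random walk with positive
variance and exponential moments on `(-(1+η), η)`, there is `c > 1` such that for all `L ≥ 1`
and `0 ≤ a ≤ L`: `E_a[e^{S_{τ_0^- - 1} - S_{τ_0^-}}] ≤ c`. -/
theorem centered_last_jump_exponential_bound
    (μ : Measure Ω) [IsProbabilityMeasure μ]
    (X : ℕ → Ω → ℝ) (hmeas : ∀ i, Measurable (X i))
    (hindep : iIndepFun X μ)
    (hident : ∀ i, IdentDistrib (X i) (X 0) μ μ)
    (hcent : ∫ ω, X 0 ω ∂μ = 0)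
    (hvar : 0 < variance (X 0) μ)
    (η : ℝ) (hη : 0 < η)
    (hexp : ∀ u : ℝ, -(1 + η) < u → u < η →
      Integrable (fun ω => Real.exp (u * X 0 ω)) μ)
    :
    ∃ c : ℝ, 1 < c ∧ ∀ L : ℝ, 1 ≤ L → ∀ a : ℝ, 0 ≤ a → a ≤ L →
      ∫⁻ ω, ENNReal.ofReal
          (Real.exp (walk X a ((hitBelow X a 0 ω).toNat - 1) ω - stopBelow X a 0 ω)) ∂μ
        ≤ ENNReal.ofReal c := by
  classical
  -- the tilting parameter
  set δ : ℝ := min η 1 / 2 with hδdef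
  have hδpos : 0 < δ := by
    have : 0 < min η 1 := lt_min hη one_pos
    positivity
  have hδhalf : δ ≤ 1 / 2 := by
    have : min η 1 ≤ 1 := min_le_right _ _
    rw [hδdef]; linarith
  have hδη : δ < η := by
    have h1 : min η 1 ≤ η := min_le_left _ _
    rw [hδdef]; linarith
  -- integrability facts
  have hEδ : Integrable (fun ω => Real.exp (-(δ * X 0 ω))) μ := by
    have h := hexp (-δ) (by linarith) (by linarith)
    simpa [neg_mul] using h
  have hEδ' : Integrable (fun ω => Real.exp (δ * X 0 ω)) μ :=
    hexp δ (by linarith) (by linarith)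
  have hE2δ : Integrable (fun ω => Real.exp (-(2 * δ * X 0 ω))) μ := by
    have h := hexp (-(2 * δ)) (by linarith) (by linarith)
    simpa [neg_mul] using h
  have hE1δ : Integrable (fun ω => Real.exp (-((1 + δ) * X 0 ω))) μ := by
    have h := hexp (-(1 + δ)) (by linarith) (by linarith)
    simpa only [neg_mul] using h
  have hEX : Integrable (X 0) μ := by
    apply Integrable.mono' (((hEδ'.add hEδ).const_mul (1/δ)))
      (hmeas 0).aestronglyMeasurable
    filter_upwards with ω
    have h1 : δ * |X 0 ω| ≤ Real.exp (δ * |X 0 ω|) := by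
      have := Real.add_one_le_exp (δ * |X 0 ω|)
      linarith
    have h2 : Real.exp (δ * |X 0 ω|) ≤ Real.exp (δ * X 0 ω) + Real.exp (-(δ * X 0 ω)) := by
      rcases abs_cases (X 0 ω) with ⟨h, _⟩ | ⟨h, _⟩
      · rw [h]
        nlinarith [Real.exp_pos (-(δ * X 0 ω))]
      · rw [h, mul_neg]
        nlinarith [Real.exp_pos (δ * X 0 ω)]
    simp only [Pi.add_apply]
    rw [Real.norm_eq_abs]
    rw [div_mul_eq_mul_div, one_mul]
    rw [le_div_iff₀ hδpos]
    nlinarith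
  -- strict Jensen
  have hne := not_ae_zero_of_var_pos μ (X 0) hvar
  have hκ := int_exp_gt_one μ (X 0) δ hδpos hEX hcent hEδ hne
  obtain ⟨A, B, hBpos, hAB, hsuper⟩ := supersolution μ (X 0) (hmeas 0) δ hδpos hEδ hE2δ hκ
  have hApos : 0 < A := lt_of_lt_of_le hBpos hAB
  set M₁ : ℝ := ∫ ω, Real.exp (-((1 + δ) * X 0 ω)) ∂μ with hM₁def
  have hM₁pos : 0 < M₁ := integral_exp_pos hE1δ
  refine ⟨1 + max 1 (M₁ * A), by nlinarith [le_max_left 1 (M₁ * A)], ?_⟩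
  intro L hL a ha haL
  clear hL haL L
  -- the two sequences
  set u : ℕ → ℝ≥0∞ := fun n => ∫⁻ ω, phi1 δ (Ypr X a n ω) ∂μ with hudef
  set w : ℕ → ℝ≥0∞ := fun n => ∫⁻ ω, phig δ A B (Ypr X a n ω) ∂μ with hwdef
  have hstep : ∀ n, w (n+1) + u n ≤ w n := fun n =>
    step_ineq μ X hmeas hindep hident a δ A B hδpos hBpos hAB hsuper n
  have hw0 : w 0 ≤ ENNReal.ofReal A := by
    have hY0 : ∀ ω : Ω, Ypr X a 0 ω = a := by
      intro ω
      unfold Ypr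
      rw [if_pos]
      · simp [walk]
      · intro k hk
        rw [Nat.le_zero.mp hk]
        simpa [walk] using ha
    have : w 0 = phig δ A B a := by
      rw [hwdef]
      simp only [hY0]
      rw [lintegral_const, measure_univ, mul_one]
    rw [this, phig, if_pos ha]
    apply ENNReal.ofReal_le_ofReal
    linarith [mul_pos hBpos (Real.exp_pos (-(δ * a)))]
  have hsum : ∀ N : ℕ, (∑ n ∈ Finset.range N, u n) + w N ≤ w 0 := by
    intro N
    induction N with
    | zero => simp
    | succ N ih =>
      rw [Finset.sum_range_succ]
      calc (∑ n ∈ Finset.range N, u n) + u N + w (N+1)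
          = (∑ n ∈ Finset.range N, u n) + (w (N+1) + u N) := by
            rw [add_assoc, add_comm (u N) (w (N+1))]
        _ ≤ (∑ n ∈ Finset.range N, u n) + w N := add_le_add_right (hstep N) _
        _ ≤ w 0 := ih
  have htsum : ∑' n, u n ≤ ENNReal.ofReal A := by
    rw [ENNReal.tsum_eq_iSup_nat]
    apply iSup_le
    intro N
    calc ∑ n ∈ Finset.range N, u n ≤ (∑ n ∈ Finset.range N, u n) + w N := le_self_add
      _ ≤ w 0 := hsum N
      _ ≤ ENNReal.ofReal A := hw0
  -- the product factor
  have hφmeas : Measurable (fun x : ℝ => ENNReal.ofReal (Real.exp (-((1 + δ) * x)))) :=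
    (Real.measurable_exp.comp (measurable_const.mul measurable_id).neg).ennreal_ofReal
  have hC1 : ∀ n, (∫⁻ ω, ENNReal.ofReal (Real.exp (-((1 + δ) * X n ω))) ∂μ)
      = ENNReal.ofReal M₁ := by
    intro n
    have hid : IdentDistrib (fun ω => ENNReal.ofReal (Real.exp (-((1 + δ) * X n ω))))
        (fun ω => ENNReal.ofReal (Real.exp (-((1 + δ) * X 0 ω)))) μ μ :=
      (hident n).comp hφmeas
    rw [hid.lintegral_eq]
    rw [← ofReal_integral_eq_lintegral_ofReal hE1δ
      (Filter.Eventually.of_forall fun ω => (Real.exp_pos _).le)]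
  have hfact : ∀ n, (∫⁻ ω, phi1 δ (Ypr X a n ω)
        * ENNReal.ofReal (Real.exp (-((1 + δ) * X n ω))) ∂μ)
      = u n * ENNReal.ofReal M₁ := by
    intro n
    have hindepn : IndepFun (fun ω => phi1 δ (Ypr X a n ω))
        (fun ω => ENNReal.ofReal (Real.exp (-((1 + δ) * X n ω)))) μ :=
      (indep_Ypr μ X hmeas hindep a n).comp (phi1_measurable δ) hφmeas
    have hm1 : Measurable (fun ω => phi1 δ (Ypr X a n ω)) :=
      (phi1_measurable δ).comp (Ypr_measurable X hmeas a n)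
    have hm2 : Measurable (fun ω => ENNReal.ofReal (Real.exp (-((1 + δ) * X n ω)))) :=
      hφmeas.comp (hmeas n)
    have h := lintegral_mul_eq_lintegral_mul_lintegral_of_indepFun hm1 hm2 hindepn
    calc ∫⁻ ω, phi1 δ (Ypr X a n ω) * ENNReal.ofReal (Real.exp (-((1 + δ) * X n ω))) ∂μ
        = (∫⁻ ω, phi1 δ (Ypr X a n ω) ∂μ)
          * ∫⁻ ω, ENNReal.ofReal (Real.exp (-((1 + δ) * X n ω))) ∂μ := h
      _ = u n * ENNReal.ofReal M₁ := by rw [hC1 n]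
  -- measurability of the terms
  have htermmeas : ∀ n, Measurable (fun ω => phi1 δ (Ypr X a n ω)
      * ENNReal.ofReal (Real.exp (-((1 + δ) * X n ω)))) := fun n =>
    ((phi1_measurable δ).comp (Ypr_measurable X hmeas a n)).mul (hφmeas.comp (hmeas n))
  -- the never-hitting set
  set Mset : Set Ω := {ω | ∀ n, 0 ≤ walk X a n ω} with hMdef
  have hMmeas : MeasurableSet Mset := by
    have hEq : Mset = ⋂ n, {ω | 0 ≤ walk X a n ω} := by
      ext ω; simp [hMdef]
    rw [hEq]
    exact MeasurableSet.iInter fun n =>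
      measurableSet_le measurable_const (walk_measurable X hmeas a n)
  -- pointwise bound
  have hptbound : ∀ ω, ENNReal.ofReal
      (Real.exp (walk X a ((hitBelow X a 0 ω).toNat - 1) ω - stopBelow X a 0 ω))
      ≤ Set.indicator Mset (fun _ => 1) ω
        + ∑' n, (phi1 δ (Ypr X a n ω) * ENNReal.ofReal (Real.exp (-((1 + δ) * X n ω)))) := by
    intro ω
    by_cases hT : hitBelow X a 0 ω = ⊤
    · have hω : ω ∈ Mset := by
        intro n
        have hlt : (n : ℕ∞) < hitBelow X a 0 ω := by
          rw [hT]; exact lt_of_le_of_ne le_top (by simp)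
        exact (lt_hitBelow_iff.mp hlt) n le_rfl
      have htn : (hitBelow X a 0 ω).toNat = 0 := by rw [hT]; rfl
      rw [Set.indicator_of_mem hω]
      unfold stopBelow
      rw [htn]
      norm_num
    · obtain ⟨m, hm⟩ := WithTop.ne_top_iff_exists.mp hT
      have hm' := hitBelow_eq_coe_iff.mp hm.symm
      obtain ⟨hwm, hprev⟩ := hm'
      have hm0 : m ≠ 0 := by
        intro h0
        rw [h0] at hwm
        simp [walk] at hwm
        linarith
      obtain ⟨n, rfl⟩ := Nat.exists_eq_succ_of_ne_zero hm0
      have htoNat : (hitBelow X a 0 ω).toNat = n + 1 := by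
        rw [← hm]; rfl
      have hTgt : ∀ k ≤ n, 0 ≤ walk X a k ω := fun k hk => hprev k (Nat.lt_succ_of_le hk)
      have hYn : Ypr X a n ω = walk X a n ω := if_pos hTgt
      have hwn : 0 ≤ walk X a n ω := hTgt n le_rfl
      rw [htoNat]
      unfold stopBelow
      rw [htoNat]
      simp only [Nat.add_sub_cancel]
      have hexpineq : Real.exp (walk X a n ω - walk X a (n+1) ω)
          ≤ Real.exp (-(δ * walk X a n ω)) * Real.exp (-((1 + δ) * X n ω)) := by
        rw [← Real.exp_add]
        apply Real.exp_le_exp.mpr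
        have hws := walk_succ X a n ω
        have h2 : δ * walk X a (n+1) ω = δ * walk X a n ω + δ * X n ω := by rw [hws]; ring
        have h3 : δ * walk X a (n+1) ω ≤ 0 :=
          mul_nonpos_of_nonneg_of_nonpos hδpos.le hwm.le
        nlinarith [h2, h3, hws]
      calc ENNReal.ofReal (Real.exp (walk X a n ω - walk X a (n+1) ω))
          ≤ ENNReal.ofReal (Real.exp (-(δ * walk X a n ω)) * Real.exp (-((1 + δ) * X n ω))) :=
            ENNReal.ofReal_le_ofReal hexpineq
        _ = ENNReal.ofReal (Real.exp (-(δ * walk X a n ω)))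
            * ENNReal.ofReal (Real.exp (-((1 + δ) * X n ω))) :=
            ENNReal.ofReal_mul (Real.exp_pos _).le
        _ = phi1 δ (Ypr X a n ω) * ENNReal.ofReal (Real.exp (-((1 + δ) * X n ω))) := by
            rw [hYn, phi1, if_pos hwn]
        _ ≤ ∑' k, (phi1 δ (Ypr X a k ω) * ENNReal.ofReal (Real.exp (-((1 + δ) * X k ω)))) :=
            ENNReal.le_tsum n
        _ ≤ Set.indicator Mset (fun _ => 1) ω
            + ∑' k, (phi1 δ (Ypr X a k ω) * ENNReal.ofReal (Real.exp (-((1 + δ) * X k ω)))) :=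
            self_le_add_left _ _
  -- integrate the pointwise bound
  calc ∫⁻ ω, ENNReal.ofReal
        (Real.exp (walk X a ((hitBelow X a 0 ω).toNat - 1) ω - stopBelow X a 0 ω)) ∂μ
      ≤ ∫⁻ ω, (Set.indicator Mset (fun _ => 1) ω
        + ∑' n, (phi1 δ (Ypr X a n ω) * ENNReal.ofReal (Real.exp (-((1 + δ) * X n ω))))) ∂μ :=
        lintegral_mono hptbound
    _ = (∫⁻ ω, Set.indicator Mset (fun _ => 1) ω ∂μ)
        + ∫⁻ ω, ∑' n, (phi1 δ (Ypr X a n ω)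
          * ENNReal.ofReal (Real.exp (-((1 + δ) * X n ω)))) ∂μ := by
        have hm : Measurable (fun ω => Set.indicator Mset (fun _ => (1:ℝ≥0∞)) ω) :=
          measurable_const.indicator hMmeas
        rw [lintegral_add_left hm]
    _ = μ Mset + ∑' n, ∫⁻ ω, (phi1 δ (Ypr X a n ω)
          * ENNReal.ofReal (Real.exp (-((1 + δ) * X n ω)))) ∂μ := by
        rw [lintegral_tsum fun n => (htermmeas n).aemeasurable]
        congr 1
        exact lintegral_indicator_one hMmeas
    _ = μ Mset + ∑' n, (u n * ENNReal.ofReal M₁) := by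
        rw [tsum_congr hfact]
    _ = μ Mset + (∑' n, u n) * ENNReal.ofReal M₁ := by
        rw [ENNReal.tsum_mul_right]
    _ ≤ 1 + ENNReal.ofReal A * ENNReal.ofReal M₁ :=
        add_le_add prob_le_one (mul_le_mul_left htsum _)
    _ = ENNReal.ofReal (1 + M₁ * A) := by
        rw [← ENNReal.ofReal_mul hApos.le, ← ENNReal.ofReal_one,
          ← ENNReal.ofReal_add zero_le_one (by nlinarith), mul_comm A M₁]
    _ ≤ ENNReal.ofReal (1 + max 1 (M₁ * A)) := by
        apply ENNReal.ofReal_le_ofReal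
        have := le_max_right 1 (M₁ * A)
        linarith
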